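/- arXiv:1002.3476 — 4 statements merged into one kernel-verified Lean document; each statement's English description precedes it below -/
import Mathlib

section
/- Let k ≥ 1 and let μ be a Borel probability measure on ℝ^k. Let (X_n) and (X̃_n) be sequences of ℝ^k-valued random vectors such that for every n, X_n and X̃_n are defined on the same probability space and X_n ≥ X̃_n. If X_n ⇒ μ and X̃_n ⇒ μ, then X_n − X̃_n → 0 in probability. -/
open MeasureTheory Filter Topology

private lemma integrable_of_bdd_meas {Ω : Type*} [MeasurableSpace Ω] (P : Measure Ω)
    [IsFiniteMeasure P] {f : Ω → ℝ} (hf : AEStronglyMeasurable f P) (C : ℝ)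
    (h : ∀ ω, ‖f ω‖ ≤ C) : Integrable f P :=
  (integrable_const C).mono' hf (Filter.Eventually.of_forall h)

/-- **Coupling lemma (first half of Lemma 4.1 generalization).**
If `X n ≥ X' n` coordinate-wise (a.s., on a common probability space for each `n`), and both
sequences converge weakly in law to the same Borel probability measure `μ` on `ℝ^k`, then
`X n − X' n` converges to zero in probability (in the sup-norm on `ℝ^k`). -/
theorem stochDom_same_limit_convergence_in_probability
    (k : ℕ) (hk : 1 ≤ k)
    (μ : Measure (Fin k → ℝ)) [IsProbabilityMeasure μ]
    (Ω : ℕ → Type*) [∀ n, MeasurableSpace (Ω n)]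
    (P : ∀ n, Measure (Ω n)) [∀ n, IsProbabilityMeasure (P n)]
    (X X' : ∀ n, Ω n → (Fin k → ℝ))
    (hX : ∀ n, Measurable (X n)) (hX' : ∀ n, Measurable (X' n))
    (hge : ∀ n, ∀ᵐ ω ∂(P n), ∀ i, X' n ω i ≤ X n ω i)
    (hXconv : ∀ f : BoundedContinuousFunction (Fin k → ℝ) ℝ,
      Tendsto (fun n => ∫ ω, f (X n ω) ∂(P n)) atTop (𝓝 (∫ x, f x ∂μ)))
    (hX'conv : ∀ f : BoundedContinuousFunction (Fin k → ℝ) ℝ,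
      Tendsto (fun n => ∫ ω, f (X' n ω) ∂(P n)) atTop (𝓝 (∫ x, f x ∂μ))) :
    ∀ ε : ℝ, 0 < ε →
      Tendsto (fun n => P n {ω | ε < ‖X n ω - X' n ω‖}) atTop (𝓝 0) := by
  intro ε hε
  rw [ENNReal.tendsto_atTop_zero]
  intro η hη
  rw [← eventually_atTop]
  -- choose a positive real θ with ofReal θ + ofReal θ ≤ η
  set θ : ℝ := (min η 1).toReal / 2 with hθdef
  have hmin_ne_top : min η 1 ≠ ⊤ := ne_top_of_le_ne_top ENNReal.one_ne_top (min_le_right _ _)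
  have hmin_pos : 0 < min η 1 := lt_min hη zero_lt_one
  have hθpos : 0 < θ := by
    have : 0 < (min η 1).toReal := ENNReal.toReal_pos hmin_pos.ne' hmin_ne_top
    positivity
  have hθsum : ENNReal.ofReal θ + ENNReal.ofReal θ ≤ η := by
    rw [← ENNReal.ofReal_add hθpos.le hθpos.le]
    have : θ + θ = (min η 1).toReal := by ring
    rw [this, ENNReal.ofReal_toReal hmin_ne_top]
    exact min_le_left _ _
  -- Step 1: choose M with μ {x | M < ‖x‖} small
  have htail : Tendsto (fun m : ℕ => μ {x : Fin k → ℝ | (m : ℝ) < ‖x‖}) atTop (𝓝 0) := by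
    have hmeas : ∀ m : ℕ, MeasurableSet {x : Fin k → ℝ | (m : ℝ) < ‖x‖} := fun m =>
      measurableSet_lt measurable_const measurable_norm
    have hanti : Antitone (fun m : ℕ => {x : Fin k → ℝ | (m : ℝ) < ‖x‖}) := by
      intro a b hab x hx
      simp only [Set.mem_setOf_eq] at hx ⊢
      exact lt_of_le_of_lt (show (a:ℝ) ≤ (b:ℝ) by exact_mod_cast hab) hx
    have hiInter : ⋂ m : ℕ, {x : Fin k → ℝ | (m : ℝ) < ‖x‖} = ∅ := by
      ext x
      simp only [Set.mem_iInter, Set.mem_setOf_eq, Set.mem_empty_iff_false, iff_false, not_forall,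
        not_lt]
      obtain ⟨m, hm⟩ := exists_nat_gt ‖x‖
      exact ⟨m, hm.le⟩
    have := tendsto_measure_iInter_atTop (fun m => (hmeas m).nullMeasurableSet) hanti
      ⟨0, measure_ne_top μ _⟩
    rwa [hiInter, measure_empty] at this
  obtain ⟨M, hM⟩ : ∃ M : ℕ, μ {x : Fin k → ℝ | (M : ℝ) < ‖x‖} < ENNReal.ofReal (θ / 2) := by
    have := (htail.eventually_lt_const (u := ENNReal.ofReal (θ/2)) (ENNReal.ofReal_pos.mpr (by positivity)))
    exact this.exists
  have hMtoReal : (μ {x : Fin k → ℝ | (M : ℝ) < ‖x‖}).toReal ≤ θ / 2 :=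
    ENNReal.toReal_le_of_le_ofReal (by positivity) hM.le
  -- the cutoff bounded continuous function h
  have hcont : Continuous fun x : Fin k → ℝ => min 1 (max 0 (‖x‖ - (M : ℝ))) :=
    continuous_const.min (continuous_const.max (continuous_norm.sub continuous_const))
  have hbd : ∀ x : Fin k → ℝ, ‖min 1 (max 0 (‖x‖ - (M : ℝ)))‖ ≤ 1 := by
    intro x
    rw [Real.norm_eq_abs, abs_le]
    constructor
    · exact le_min (by norm_num) (le_max_left _ _) |>.trans' (by norm_num)
    · exact min_le_left _ _
  set hB : BoundedContinuousFunction (Fin k → ℝ) ℝ :=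
    BoundedContinuousFunction.ofNormedAddCommGroup _ hcont 1 hbd with hBdef
  have hBapp : ∀ x, hB x = min 1 (max 0 (‖x‖ - (M : ℝ))) := fun x => rfl
  have hBnonneg : ∀ x, 0 ≤ hB x := fun x => le_min (by norm_num) (le_max_left _ _)
  -- ∫ hB dμ ≤ θ/2
  have hint_hB_mu : ∫ x, hB x ∂μ ≤ θ / 2 := by
    have hle : ∀ x, hB x ≤ Set.indicator {x : Fin k → ℝ | (M : ℝ) < ‖x‖} (fun _ => (1:ℝ)) x := by
      intro x
      by_cases hx : (M : ℝ) < ‖x‖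
      · have hxm : x ∈ {x : Fin k → ℝ | (M : ℝ) < ‖x‖} := hx
        rw [Set.indicator_of_mem hxm]
        exact min_le_left _ _
      · have hxm : x ∉ {x : Fin k → ℝ | (M : ℝ) < ‖x‖} := hx
        rw [Set.indicator_of_notMem hxm, hBapp]
        have : ‖x‖ - (M : ℝ) ≤ 0 := by linarith [not_lt.mp hx]
        simp [max_eq_left this]
    have hind : Integrable (Set.indicator {x : Fin k → ℝ | (M : ℝ) < ‖x‖} (fun _ => (1:ℝ))) μ :=
      (integrable_const (1:ℝ)).indicator (measurableSet_lt measurable_const measurable_norm)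
    have hBint : Integrable (fun x => hB x) μ :=
      integrable_of_bdd_meas μ hB.continuous.measurable.aestronglyMeasurable 1 hbd
    calc ∫ x, hB x ∂μ ≤ ∫ x, Set.indicator {x : Fin k → ℝ | (M : ℝ) < ‖x‖} (fun _ => (1:ℝ)) x ∂μ :=
          integral_mono hBint hind hle
      _ = (μ {x : Fin k → ℝ | (M : ℝ) < ‖x‖}).toReal • (1:ℝ) :=
          integral_indicator_const _ (measurableSet_lt measurable_const measurable_norm)
      _ ≤ θ / 2 := by rw [smul_eq_mul, mul_one]; exact hMtoReal
  -- Step 2: the clamp function g and F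
  set M' : ℝ := (M : ℝ) + 1 + ε with hM'def
  have hM'pos : 0 < M' := by positivity
  set g : ℝ → ℝ := fun t => max (-M') (min M' t) with hgdef
  have hgmono : Monotone g := fun a b hab =>
    max_le_max le_rfl (min_le_min le_rfl hab)
  have hgbd : ∀ t, ‖g t‖ ≤ M' := by
    intro t
    rw [Real.norm_eq_abs, abs_le]
    exact ⟨le_max_left _ _, max_le (by linarith) (min_le_left _ _)⟩
  have hFcont : Continuous fun x : Fin k → ℝ => ∑ i, g (x i) := by
    apply continuous_finset_sum
    intro i _
    exact (continuous_const.max (continuous_const.min continuous_id)).comp (continuous_apply i)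
  have hFbd : ∀ x : Fin k → ℝ, ‖∑ i, g (x i)‖ ≤ (k : ℝ) * M' := by
    intro x
    calc ‖∑ i, g (x i)‖ ≤ ∑ i, ‖g (x i)‖ := norm_sum_le _ _
      _ ≤ ∑ _i : Fin k, M' := Finset.sum_le_sum fun i _ => hgbd _
      _ = (k : ℝ) * M' := by simp [mul_comm]
  set F : BoundedContinuousFunction (Fin k → ℝ) ℝ :=
    BoundedContinuousFunction.ofNormedAddCommGroup _ hFcont ((k:ℝ) * M') hFbd with hFdef
  have hFapp : ∀ x, F x = ∑ i, g (x i) := fun x => rfl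
  -- expectations
  have hFXint : ∀ n, Integrable (fun ω => F (X n ω)) (P n) := fun n =>
    integrable_of_bdd_meas _ ((F.continuous.measurable.comp (hX n)).aestronglyMeasurable)
      ((k:ℝ) * M') (fun ω => hFbd _)
  have hFX'int : ∀ n, Integrable (fun ω => F (X' n ω)) (P n) := fun n =>
    integrable_of_bdd_meas _ ((F.continuous.measurable.comp (hX' n)).aestronglyMeasurable)
      ((k:ℝ) * M') (fun ω => hFbd _)
  have hDtend : Tendsto (fun n => ∫ ω, (F (X n ω) - F (X' n ω)) ∂(P n)) atTop (𝓝 0) := by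
    have h1 := (hXconv F).sub (hX'conv F)
    rw [sub_self] at h1
    have : ∀ n, ∫ ω, (F (X n ω) - F (X' n ω)) ∂(P n)
        = (∫ ω, F (X n ω) ∂(P n)) - ∫ ω, F (X' n ω) ∂(P n) := fun n =>
      integral_sub (hFXint n) (hFX'int n)
    simpa [this] using h1
  -- eventual bounds
  have hev1 : ∀ᶠ n in atTop, ∫ ω, hB (X' n ω) ∂(P n) < θ :=
    (hX'conv hB).eventually_lt_const (by linarith)
  have hev2 : ∀ᶠ n in atTop, ∫ ω, (F (X n ω) - F (X' n ω)) ∂(P n) < ε * θ :=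
    hDtend.eventually_lt_const (by positivity)
  filter_upwards [hev1, hev2] with n h1 h2
  -- the two bad events
  set T1 : Set (Ω n) := {ω | 1 ≤ hB (X' n ω)} with hT1def
  set T2 : Set (Ω n) := {ω | ε ≤ F (X n ω) - F (X' n ω)} with hT2def
  -- a.e. inclusion
  have hincl : {ω | ε < ‖X n ω - X' n ω‖} ≤ᵐ[P n] ((T1 ∪ T2 : Set (Ω n))) := by
    filter_upwards [hge n] with ω hω hmem
    have hmem : ε < ‖X n ω - X' n ω‖ := hmem
    by_cases hb : ω ∈ T1
    · exact Or.inl hb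
    right
    -- all coordinates of X' are bounded by M+1
    have hbound : ∀ i, |X' n ω i| ≤ (M : ℝ) + 1 := by
      intro i
      by_contra hcon
      push_neg at hcon
      apply hb
      have hnorm : (M : ℝ) + 1 ≤ ‖X' n ω‖ := le_trans hcon.le (norm_le_pi_norm (X' n ω) i)
      have h1' : (1 : ℝ) ≤ ‖X' n ω‖ - (M : ℝ) := by linarith
      show (1:ℝ) ≤ hB (X' n ω)
      rw [hBapp]
      exact le_min le_rfl (le_max_of_le_right h1')
    -- some coordinate gap exceeds ε
    obtain ⟨i, hi⟩ : ∃ i, ε < X n ω i - X' n ω i := by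
      by_contra hcon
      push_neg at hcon
      have : ‖X n ω - X' n ω‖ ≤ ε := by
        rw [pi_norm_le_iff_of_nonneg hε.le]
        intro i
        rw [Pi.sub_apply, Real.norm_eq_abs, abs_le]
        exact ⟨by linarith [hω i, hε], by simpa using hcon i⟩
      exact absurd hmem (not_lt.mpr this)
    -- conclude on F
    show ε ≤ F (X n ω) - F (X' n ω)
    rw [hFapp, hFapp, ← Finset.sum_sub_distrib]
    have hterm : ∀ j ∈ Finset.univ, 0 ≤ g (X n ω j) - g (X' n ω j) := fun j _ =>
      sub_nonneg.mpr (hgmono (hω j))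
    have hkey : ε ≤ g (X n ω i) - g (X' n ω i) := by
      have hai : |X' n ω i| ≤ (M : ℝ) + 1 := hbound i
      rw [abs_le] at hai
      have hga : g (X' n ω i) = X' n ω i := by
        rw [hgdef]
        simp only
        rw [min_eq_right (by linarith), max_eq_right (by linarith)]
      have hgb : X' n ω i + ε ≤ g (X n ω i) := by
        have h1'' : min M' (X' n ω i + ε) = X' n ω i + ε := min_eq_right (by simp [hM'def]; linarith)
        calc X' n ω i + ε = min M' (X' n ω i + ε) := h1''.symm
          _ ≤ min M' (X n ω i) := min_le_min le_rfl (by linarith)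
          _ ≤ g (X n ω i) := le_max_right _ _
      rw [hga]
      linarith
    calc ε ≤ g (X n ω i) - g (X' n ω i) := hkey
      _ ≤ ∑ j, (g (X n ω j) - g (X' n ω j)) := Finset.single_le_sum hterm (Finset.mem_univ i)
  -- Markov for T1
  have hT1bd : P n T1 ≤ ENNReal.ofReal θ := by
    have hint : Integrable (fun ω => hB (X' n ω)) (P n) :=
      integrable_of_bdd_meas _ ((hB.continuous.measurable.comp (hX' n)).aestronglyMeasurable)
        1 (fun ω => hbd _)
    have hmarkov := mul_meas_ge_le_integral_of_nonneg
      (Filter.Eventually.of_forall fun ω => hBnonneg (X' n ω)) hint 1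
    rw [one_mul] at hmarkov
    rw [ENNReal.le_ofReal_iff_toReal_le (measure_ne_top _ _) hθpos.le]
    exact hmarkov.trans h1.le
  -- Markov for T2
  have hT2bd : P n T2 ≤ ENNReal.ofReal θ := by
    have hint : Integrable (fun ω => F (X n ω) - F (X' n ω)) (P n) :=
      (hFXint n).sub (hFX'int n)
    have hnonneg : 0 ≤ᵐ[P n] fun ω => F (X n ω) - F (X' n ω) := by
      filter_upwards [hge n] with ω hω
      rw [Pi.zero_apply, sub_nonneg, hFapp, hFapp]
      exact Finset.sum_le_sum fun j _ => hgmono (hω j)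
    have hmarkov := mul_meas_ge_le_integral_of_nonneg hnonneg hint ε
    rw [ENNReal.le_ofReal_iff_toReal_le (measure_ne_top _ _) hθpos.le]
    have h3 : ε * (P n T2).toReal ≤ ε * θ := hmarkov.trans h2.le
    exact le_of_mul_le_mul_left h3 hε
  calc P n {ω | ε < ‖X n ω - X' n ω‖} ≤ P n (T1 ∪ T2) := measure_mono_ae hincl
    _ ≤ P n T1 + P n T2 := measure_union_le _ _
    _ ≤ ENNReal.ofReal θ + ENNReal.ofReal θ := add_le_add hT1bd hT2bd
    _ ≤ η := hθsum
end

section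
/- Let k ≥ 1 and let μ₁, μ₂, μ₃ be Borel probability measures on ℝ^k. Let X_n, X̃_n, Y_n, Ỹ_n be ℝ^k-valued random vectors, all four defined on a common probability space for each n, such that X_n ≥ X̃_n, X_n ⇒ μ₁ and X̃_n ⇒ μ₁, and Y_n ≥ Ỹ_n, Y_n ⇒ μ₂ and Ỹ_n ⇒ μ₂. Let Z_n = max(X_n, Y_n) and Z̃_n = max(X̃_n, Ỹ_n), where max denotes the coordinate-wise maximum. If Z̃_n ⇒ μ₃, then Z_n ⇒ μ₃. -/
open MeasureTheory Filter Topology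

/-- Bounded continuous function `x ↦ ∑ i, arctan (x i)` on `ℝ^k`. -/
noncomputable def arctanSumBCF (k : ℕ) : BoundedContinuousFunction (Fin k → ℝ) ℝ :=
  BoundedContinuousFunction.ofNormedAddCommGroup
    (fun x => ∑ i, Real.arctan (x i))
    (continuous_finset_sum _ fun i _ => Real.continuous_arctan.comp (continuous_apply i))
    (k * (Real.pi / 2))
    (by
      intro x
      calc ‖∑ i, Real.arctan (x i)‖ ≤ ∑ i : Fin k, ‖Real.arctan (x i)‖ := norm_sum_le _ _
        _ ≤ ∑ _i : Fin k, (Real.pi / 2) := by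
            refine Finset.sum_le_sum fun i _ => ?_
            rw [Real.norm_eq_abs]
            exact abs_le.2 ⟨(Real.neg_pi_div_two_lt_arctan _).le, (Real.arctan_lt_pi_div_two _).le⟩
        _ = k * (Real.pi / 2) := by
            simp [Finset.sum_const, Finset.card_univ, nsmul_eq_mul])

@[simp] lemma arctanSumBCF_apply (k : ℕ) (x : Fin k → ℝ) :
    arctanSumBCF k x = ∑ i, Real.arctan (x i) := rfl

/-- Bounded continuous cutoff function: `0` on the ball of radius `M`, `1` outside radius `M+1`. -/
noncomputable def cutoffBCF (k : ℕ) (M : ℝ) : BoundedContinuousFunction (Fin k → ℝ) ℝ :=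
  BoundedContinuousFunction.ofNormedAddCommGroup
    (fun x => min 1 (max 0 (‖x‖ - M)))
    (continuous_const.min (continuous_const.max (continuous_norm.sub continuous_const)))
    1
    (fun x => by
      rw [Real.norm_eq_abs, abs_le]
      constructor
      · have := le_min zero_le_one (le_max_left (0:ℝ) (‖x‖ - M))
        linarith
      · exact min_le_left _ _)

@[simp] lemma cutoffBCF_apply (k : ℕ) (M : ℝ) (x : Fin k → ℝ) :
    cutoffBCF k M x = min 1 (max 0 (‖x‖ - M)) := rfl

lemma cutoffBCF_nonneg (k : ℕ) (M : ℝ) (x : Fin k → ℝ) : 0 ≤ cutoffBCF k M x :=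
  le_min zero_le_one (le_max_left _ _)

lemma cutoffBCF_le_one (k : ℕ) (M : ℝ) (x : Fin k → ℝ) : cutoffBCF k M x ≤ 1 :=
  min_le_left _ _

lemma cutoffBCF_eq_one (k : ℕ) (M : ℝ) (x : Fin k → ℝ) (h : M + 1 ≤ ‖x‖) :
    cutoffBCF k M x = 1 := by
  have h1 : max 0 (‖x‖ - M) = ‖x‖ - M := max_eq_right (by linarith)
  rw [cutoffBCF_apply, h1]
  exact min_eq_left (by linarith)

lemma cutoffBCF_le_indicator (k : ℕ) (M : ℝ) (x : Fin k → ℝ) :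
    cutoffBCF k M x ≤ Set.indicator {y : Fin k → ℝ | M < ‖y‖} (fun _ => (1:ℝ)) x := by
  by_cases hx : M < ‖x‖
  · rw [Set.indicator_of_mem (by exact hx : x ∈ {y : Fin k → ℝ | M < ‖y‖})]
    exact cutoffBCF_le_one k M x
  · rw [Set.indicator_of_notMem (by exact hx : x ∉ {y : Fin k → ℝ | M < ‖y‖})]
    have h1 : max 0 (‖x‖ - M) = 0 := max_eq_left (by push_neg at hx; linarith)
    rw [cutoffBCF_apply, h1]
    simp

lemma arctan_gap (δ R : ℝ) (hδ : 0 < δ) (hR : 0 < R) :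
    ∃ η > 0, ∀ s t : ℝ, t ≤ R → -R ≤ s → t + δ ≤ s →
      η ≤ Real.arctan s - Real.arctan t := by
  obtain ⟨t₀, ht₀, hmin⟩ := (isCompact_Icc (a := -R - δ) (b := R)).exists_isMinOn
    ⟨0, by constructor <;> linarith⟩
    (((Real.continuous_arctan.comp (continuous_id.add continuous_const)).sub
      Real.continuous_arctan).continuousOn)
  refine ⟨min (Real.arctan (t₀ + δ) - Real.arctan t₀)
      (Real.arctan (-R) - Real.arctan (-R - δ)), ?_, ?_⟩
  · exact lt_min (sub_pos.2 (Real.arctan_strictMono (by linarith)))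
      (sub_pos.2 (Real.arctan_strictMono (by linarith)))
  · intro s t htR hsR hst
    rcases le_or_gt (-R - δ) t with ht | ht
    · have h1 : Real.arctan (t₀ + δ) - Real.arctan t₀ ≤ Real.arctan (t + δ) - Real.arctan t :=
        isMinOn_iff.1 hmin t ⟨ht, htR⟩
      have h2 : Real.arctan (t + δ) ≤ Real.arctan s := Real.arctan_strictMono.monotone hst
      exact (min_le_left _ _).trans (by linarith)
    · have h1 : Real.arctan t ≤ Real.arctan (-R - δ) := Real.arctan_strictMono.monotone ht.le
      have h2 : Real.arctan (-R) ≤ Real.arctan s := Real.arctan_strictMono.monotone hsR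
      exact (min_le_right _ _).trans (by linarith)

/-- **Coupling lemma for coordinate-wise maxima (Lemma 4.2 generalization).**
If `X n ≥ X' n` with both converging weakly to `μ₁`, `Y n ≥ Y' n` with both converging weakly
to `μ₂` (all four on a common probability space for each `n`), and the coordinate-wise maximum
`Z' n = max (X' n, Y' n)` converges weakly to `μ₃`, then so does `Z n = max (X n, Y n)`. -/
theorem stochDom_max_weak_limit
    (k : ℕ) (hk : 1 ≤ k)
    (μ₁ μ₂ μ₃ : Measure (Fin k → ℝ))
    [IsProbabilityMeasure μ₁] [IsProbabilityMeasure μ₂] [IsProbabilityMeasure μ₃]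
    (Ω : ℕ → Type*) [∀ n, MeasurableSpace (Ω n)]
    (P : ∀ n, Measure (Ω n)) [∀ n, IsProbabilityMeasure (P n)]
    (X X' Y Y' : ∀ n, Ω n → (Fin k → ℝ))
    (hX : ∀ n, Measurable (X n)) (hX' : ∀ n, Measurable (X' n))
    (hY : ∀ n, Measurable (Y n)) (hY' : ∀ n, Measurable (Y' n))
    (hgeX : ∀ n, ∀ᵐ ω ∂(P n), ∀ i, X' n ω i ≤ X n ω i)
    (hgeY : ∀ n, ∀ᵐ ω ∂(P n), ∀ i, Y' n ω i ≤ Y n ω i)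
    (hXconv : ∀ f : BoundedContinuousFunction (Fin k → ℝ) ℝ,
      Tendsto (fun n => ∫ ω, f (X n ω) ∂(P n)) atTop (𝓝 (∫ x, f x ∂μ₁)))
    (hX'conv : ∀ f : BoundedContinuousFunction (Fin k → ℝ) ℝ,
      Tendsto (fun n => ∫ ω, f (X' n ω) ∂(P n)) atTop (𝓝 (∫ x, f x ∂μ₁)))
    (hYconv : ∀ f : BoundedContinuousFunction (Fin k → ℝ) ℝ,
      Tendsto (fun n => ∫ ω, f (Y n ω) ∂(P n)) atTop (𝓝 (∫ x, f x ∂μ₂)))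
    (hY'conv : ∀ f : BoundedContinuousFunction (Fin k → ℝ) ℝ,
      Tendsto (fun n => ∫ ω, f (Y' n ω) ∂(P n)) atTop (𝓝 (∫ x, f x ∂μ₂)))
    (hZ'conv : ∀ f : BoundedContinuousFunction (Fin k → ℝ) ℝ,
      Tendsto (fun n => ∫ ω, f (fun i => max (X' n ω i) (Y' n ω i)) ∂(P n)) atTop
        (𝓝 (∫ x, f x ∂μ₃))) :
    ∀ f : BoundedContinuousFunction (Fin k → ℝ) ℝ,
      Tendsto (fun n => ∫ ω, f (fun i => max (X n ω i) (Y n ω i)) ∂(P n)) atTop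
        (𝓝 (∫ x, f x ∂μ₃)) := by
  intro f
  set C := ‖f‖ with hCdef
  have hC : 0 ≤ C := norm_nonneg f
  -- measurability of the maxima
  have hZm : ∀ n, Measurable fun ω : Ω n => (fun i => max (X n ω i) (Y n ω i)) := fun n =>
    measurable_pi_lambda _ fun i =>
      ((measurable_pi_apply i).comp (hX n)).max ((measurable_pi_apply i).comp (hY n))
  have hZ'm : ∀ n, Measurable fun ω : Ω n => (fun i => max (X' n ω i) (Y' n ω i)) := fun n =>
    measurable_pi_lambda _ fun i =>
      ((measurable_pi_apply i).comp (hX' n)).max ((measurable_pi_apply i).comp (hY' n))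
  -- generic integrability of bounded continuous functions of measurable maps
  have hint : ∀ (g : BoundedContinuousFunction (Fin k → ℝ) ℝ) (n : ℕ) (T : Ω n → Fin k → ℝ),
      Measurable T → Integrable (fun ω => g (T ω)) (P n) := by
    intro g n T hT
    refine Integrable.mono' (integrable_const ‖g‖)
      (g.continuous.measurable.comp hT).aestronglyMeasurable ?_
    exact Eventually.of_forall fun ω => g.norm_coe_le_norm _
  set G := arctanSumBCF k with hGdef
  -- the nonnegative "coupling defect" and its expectation
  set W : ∀ n : ℕ, Ω n → ℝ := fun n ω =>
    (G (X n ω) - G (X' n ω)) + (G (Y n ω) - G (Y' n ω)) with hWdef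
  have hGsub : ∀ u v : Fin k → ℝ,
      G u - G v = ∑ i, (Real.arctan (u i) - Real.arctan (v i)) := by
    intro u v
    rw [hGdef, arctanSumBCF_apply, arctanSumBCF_apply, Finset.sum_sub_distrib]
  have hWint : ∀ n, Integrable (W n) (P n) := fun n =>
    ((hint G n _ (hX n)).sub (hint G n _ (hX' n))).add
      ((hint G n _ (hY n)).sub (hint G n _ (hY' n)))
  have hWtendsto : Tendsto (fun n => ∫ ω, W n ω ∂(P n)) atTop (𝓝 0) := by
    have h := ((hXconv G).sub (hX'conv G)).add ((hYconv G).sub (hY'conv G))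
    simp only [sub_self, add_zero] at h
    have heq : ∀ n, ∫ ω, W n ω ∂(P n) =
        ((∫ ω, G (X n ω) ∂(P n)) - ∫ ω, G (X' n ω) ∂(P n)) +
        ((∫ ω, G (Y n ω) ∂(P n)) - ∫ ω, G (Y' n ω) ∂(P n)) := fun n => by
      have hIX : Integrable (fun ω : Ω n => G (X n ω) - G (X' n ω)) (P n) :=
        (hint G n _ (hX n)).sub (hint G n _ (hX' n))
      have hIY : Integrable (fun ω : Ω n => G (Y n ω) - G (Y' n ω)) (P n) :=
        (hint G n _ (hY n)).sub (hint G n _ (hY' n))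
      show ∫ ω, ((G (X n ω) - G (X' n ω)) + (G (Y n ω) - G (Y' n ω))) ∂(P n) = _
      rw [integral_add hIX hIY,
        integral_sub (hint G n _ (hX n)) (hint G n _ (hX' n)),
        integral_sub (hint G n _ (hY n)) (hint G n _ (hY' n))]
    exact (tendsto_congr heq).2 h
  -- key step: the difference of integrals tends to 0
  have key : Tendsto (fun n => (∫ ω, f (fun i => max (X n ω i) (Y n ω i)) ∂(P n))
      - ∫ ω, f (fun i => max (X' n ω i) (Y' n ω i)) ∂(P n)) atTop (𝓝 0) := by
    rw [NormedAddCommGroup.tendsto_nhds_zero]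
    intro ε hε
    set c : ℝ := ε / (6 * (C + 1)) with hcdef
    have hcpos : 0 < c := by
      rw [hcdef]; positivity
    -- choose M with small μ₃-tail
    have htail : Tendsto (fun M : ℕ => μ₃ {x : Fin k → ℝ | (M : ℝ) < ‖x‖}) atTop (𝓝 0) := by
      have h0 : (⋂ M : ℕ, {x : Fin k → ℝ | (M : ℝ) < ‖x‖}) = ∅ := by
        ext x
        simp only [Set.mem_iInter, Set.mem_setOf_eq, Set.mem_empty_iff_false, iff_false, not_forall,
          not_lt]
        obtain ⟨M, hM⟩ := exists_nat_gt ‖x‖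
        exact ⟨M, hM.le⟩
      have h := tendsto_measure_iInter_atTop (μ := μ₃)
        (s := fun M : ℕ => {x : Fin k → ℝ | (M : ℝ) < ‖x‖})
        (fun M => (measurableSet_lt measurable_const measurable_norm).nullMeasurableSet)
        (fun M M' hMM' x hx => lt_of_le_of_lt ((by exact_mod_cast hMM' : ((M:ℕ):ℝ) ≤ ((M':ℕ):ℝ))) hx)
        ⟨0, measure_ne_top μ₃ _⟩
      rwa [h0, measure_empty] at h
    obtain ⟨M, hM⟩ := (htail.eventually_lt_const
      (by simp [hcpos] : (0 : ENNReal) < ENNReal.ofReal c)).exists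
    have hMtail : (μ₃ {x : Fin k → ℝ | (M : ℝ) < ‖x‖}).toReal < c :=
      ENNReal.toReal_lt_of_lt_ofReal hM
    set ψ := cutoffBCF k (M : ℝ) with hψdef
    -- ∫ ψ dμ₃ < c
    have hψμ₃ : ∫ x, ψ x ∂μ₃ < c := by
      have hmeas : MeasurableSet {x : Fin k → ℝ | (M : ℝ) < ‖x‖} :=
        measurableSet_lt measurable_const measurable_norm
      have hle : ∫ x, ψ x ∂μ₃ ≤ (μ₃ {x : Fin k → ℝ | (M : ℝ) < ‖x‖}).toReal := by
        calc ∫ x, ψ x ∂μ₃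
            ≤ ∫ x, Set.indicator {y : Fin k → ℝ | (M : ℝ) < ‖y‖} (fun _ => (1:ℝ)) x ∂μ₃ := by
              refine integral_mono (ψ.integrable μ₃) ((integrable_const (1:ℝ)).indicator hmeas) ?_
              exact fun x => cutoffBCF_le_indicator k _ x
          _ = (μ₃ {x : Fin k → ℝ | (M : ℝ) < ‖x‖}).toReal := by
              rw [integral_indicator_const (1:ℝ) hmeas, smul_eq_mul, mul_one]; rfl
      linarith
    -- eventually ∫ ψ (Z' n) < c
    have hψev : ∀ᶠ n in atTop,
        (∫ ω, ψ (fun i => max (X' n ω i) (Y' n ω i)) ∂(P n)) < c :=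
      (hZ'conv ψ).eventually_lt_const hψμ₃
    -- uniform continuity of f on a large ball
    have hKc : IsCompact (Metric.closedBall (0 : Fin k → ℝ) ((M : ℝ) + 2)) :=
      isCompact_closedBall _ _
    obtain ⟨δ₀, hδ₀pos, hδ₀⟩ := Metric.uniformContinuousOn_iff.1
      (hKc.uniformContinuousOn_of_continuous f.continuous.continuousOn) (ε / 3) (by positivity)
    set δ : ℝ := min (δ₀ / 2) 1 with hδdef
    have hδpos : 0 < δ := lt_min (by linarith) one_pos
    have hδle1 : δ ≤ 1 := min_le_right _ _
    have hδltδ₀ : δ < δ₀ := lt_of_le_of_lt (min_le_left _ _) (by linarith)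
    -- the arctan gap constant
    set R : ℝ := (M : ℝ) + 1 with hRdef
    have hRpos : 0 < R := by rw [hRdef]; positivity
    obtain ⟨η, hηpos, hη⟩ := arctan_gap δ R hδpos hRpos
    -- eventually ∫ W n < η * c
    have hWev : ∀ᶠ n in atTop, (∫ ω, W n ω ∂(P n)) < η * c :=
      hWtendsto.eventually_lt_const (by positivity)
    filter_upwards [hψev, hWev] with n hψn hWn
    -- pointwise bound
    have hptwise : ∀ᵐ ω ∂(P n),
        ‖f (fun i => max (X n ω i) (Y n ω i)) - f (fun i => max (X' n ω i) (Y' n ω i))‖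
          ≤ ε / 3 + (2 * C) * ψ (fun i => max (X' n ω i) (Y' n ω i)) + (2 * C / η) * W n ω := by
      filter_upwards [hgeX n, hgeY n] with ω hx hy
      set Z : Fin k → ℝ := fun i => max (X n ω i) (Y n ω i) with hZdef
      set Z' : Fin k → ℝ := fun i => max (X' n ω i) (Y' n ω i) with hZ'def
      have hXterm : ∀ j, 0 ≤ Real.arctan (X n ω j) - Real.arctan (X' n ω j) := fun j =>
        sub_nonneg.2 (Real.arctan_strictMono.monotone (hx j))
      have hYterm : ∀ j, 0 ≤ Real.arctan (Y n ω j) - Real.arctan (Y' n ω j) := fun j =>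
        sub_nonneg.2 (Real.arctan_strictMono.monotone (hy j))
      have hWX : G (X n ω) - G (X' n ω) =
          ∑ j, (Real.arctan (X n ω j) - Real.arctan (X' n ω j)) := hGsub _ _
      have hWY : G (Y n ω) - G (Y' n ω) =
          ∑ j, (Real.arctan (Y n ω j) - Real.arctan (Y' n ω j)) := hGsub _ _
      have hWX0 : 0 ≤ G (X n ω) - G (X' n ω) := by
        rw [hWX]; exact Finset.sum_nonneg fun j _ => hXterm j
      have hWY0 : 0 ≤ G (Y n ω) - G (Y' n ω) := by
        rw [hWY]; exact Finset.sum_nonneg fun j _ => hYterm j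
      have hW0 : 0 ≤ W n ω := by rw [hWdef]; dsimp only; linarith
      have hψ0 : 0 ≤ ψ Z' := cutoffBCF_nonneg _ _ _
      have hfb : ‖f Z - f Z'‖ ≤ 2 * C := by
        calc ‖f Z - f Z'‖ ≤ ‖f Z‖ + ‖f Z'‖ := norm_sub_le _ _
          _ ≤ C + C := add_le_add (f.norm_coe_le_norm _) (f.norm_coe_le_norm _)
          _ = 2 * C := by ring
      have hWterm0 : 0 ≤ (2 * C / η) * W n ω :=
        mul_nonneg (by positivity) hW0
      by_cases hZ'big : (M : ℝ) + 1 ≤ ‖Z'‖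
      · have hψ1 : ψ Z' = 1 := cutoffBCF_eq_one _ _ _ hZ'big
        rw [hψ1]
        have hε3 : 0 ≤ ε / 3 := by positivity
        linarith
      · push_neg at hZ'big
        have hcoordZ' : ∀ i, |Z' i| ≤ R := by
          intro i
          have h1 : ‖Z' i‖ ≤ ‖Z'‖ := norm_le_pi_norm Z' i
          rw [Real.norm_eq_abs] at h1
          rw [hRdef]; linarith
        by_cases hgap : ∀ i, Z i - Z' i ≤ δ
        · -- uniform continuity case
          have hZ'K : Z' ∈ Metric.closedBall (0 : Fin k → ℝ) ((M : ℝ) + 2) := by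
            rw [Metric.mem_closedBall, dist_zero_right]; linarith
          have hnorm : ‖Z - Z'‖ ≤ δ := by
            rw [pi_norm_le_iff_of_nonneg hδpos.le]
            intro i
            have h0 : Z' i ≤ Z i := max_le_max (hx i) (hy i)
            have he : ‖(Z - Z') i‖ = |Z i - Z' i| := by simp [Real.norm_eq_abs]
            rw [he, abs_of_nonneg (sub_nonneg.2 h0)]
            exact hgap i
          have hZK : Z ∈ Metric.closedBall (0 : Fin k → ℝ) ((M : ℝ) + 2) := by
            rw [Metric.mem_closedBall, dist_zero_right]
            have h1 : ‖Z‖ ≤ ‖Z'‖ + ‖Z - Z'‖ := by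
              have := norm_add_le Z' (Z - Z')
              simpa using this
            linarith
          have hdist : dist Z Z' < δ₀ := by
            rw [dist_eq_norm]; linarith
          have := hδ₀ Z hZK Z' hZ'K hdist
          rw [dist_eq_norm] at this
          have h2C : 0 ≤ (2 * C) * ψ Z' := mul_nonneg (by positivity) hψ0
          linarith
        · -- large gap case : W is at least η
          push_neg at hgap
          obtain ⟨i, hi⟩ := hgap
          have hZ'i : |Z' i| ≤ R := hcoordZ' i
          have habs := abs_le.1 hZ'i
          have hηW : η ≤ W n ω := by
            have hZi : Z i = max (X n ω i) (Y n ω i) := rfl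
            have hZ'i2 : Z' i = max (X' n ω i) (Y' n ω i) := rfl
            have hcore : η ≤ Real.arctan (X n ω i) - Real.arctan (X' n ω i) ∨
                η ≤ Real.arctan (Y n ω i) - Real.arctan (Y' n ω i) := by
              rcases le_total (Y n ω i) (X n ω i) with hxy | hxy
              · left
                have hmax : Z i = X n ω i := by rw [hZi]; exact max_eq_left hxy
                refine hη _ _ ?_ ?_ ?_
                · have : X' n ω i ≤ Z' i := by rw [hZ'i2]; exact le_max_left _ _
                  linarith
                · linarith [hi, habs.1]
                · have : X' n ω i ≤ Z' i := by rw [hZ'i2]; exact le_max_left _ _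
                  linarith [hi]
              · right
                have hmax : Z i = Y n ω i := by rw [hZi]; exact max_eq_right hxy
                refine hη _ _ ?_ ?_ ?_
                · have : Y' n ω i ≤ Z' i := by rw [hZ'i2]; exact le_max_right _ _
                  linarith
                · linarith [hi, habs.1]
                · have : Y' n ω i ≤ Z' i := by rw [hZ'i2]; exact le_max_right _ _
                  linarith [hi]
            have hsumX : Real.arctan (X n ω i) - Real.arctan (X' n ω i)
                ≤ G (X n ω) - G (X' n ω) := by
              rw [hWX]
              exact Finset.single_le_sum (fun j _ => hXterm j) (Finset.mem_univ i)
            have hsumY : Real.arctan (Y n ω i) - Real.arctan (Y' n ω i)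
                ≤ G (Y n ω) - G (Y' n ω) := by
              rw [hWY]
              exact Finset.single_le_sum (fun j _ => hYterm j) (Finset.mem_univ i)
            rcases hcore with h | h
            · rw [hWdef]; dsimp only; linarith
            · rw [hWdef]; dsimp only; linarith
          have h2C : 0 ≤ (2 * C) * ψ Z' := mul_nonneg (by positivity) hψ0
          have hWbig : 2 * C ≤ (2 * C / η) * W n ω := by
            have h1 : (2 * C / η) * η ≤ (2 * C / η) * W n ω :=
              mul_le_mul_of_nonneg_left hηW (by positivity)
            rwa [div_mul_cancel₀ _ (ne_of_gt hηpos)] at h1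
          have hε3 : 0 ≤ ε / 3 := by positivity
          linarith
    -- integrate the pointwise bound
    have hIψ : Integrable (fun ω => ψ (fun i => max (X' n ω i) (Y' n ω i))) (P n) :=
      hint ψ n _ (hZ'm n)
    have hIfZ : Integrable (fun ω => f (fun i => max (X n ω i) (Y n ω i))) (P n) :=
      hint f n _ (hZm n)
    have hIfZ' : Integrable (fun ω => f (fun i => max (X' n ω i) (Y' n ω i))) (P n) :=
      hint f n _ (hZ'm n)
    have hRHSint : Integrable (fun ω =>
        ε / 3 + (2 * C) * ψ (fun i => max (X' n ω i) (Y' n ω i)) + (2 * C / η) * W n ω) (P n) :=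
      ((integrable_const (ε / 3)).add (hIψ.const_mul (2 * C))).add ((hWint n).const_mul (2 * C / η))
    have hd : ‖(∫ ω, f (fun i => max (X n ω i) (Y n ω i)) ∂(P n))
        - ∫ ω, f (fun i => max (X' n ω i) (Y' n ω i)) ∂(P n)‖
        ≤ ε / 3 + (2 * C) * (∫ ω, ψ (fun i => max (X' n ω i) (Y' n ω i)) ∂(P n))
          + (2 * C / η) * (∫ ω, W n ω ∂(P n)) := by
      rw [← integral_sub hIfZ hIfZ']
      refine (norm_integral_le_integral_norm _).trans ?_
      have h1 : ∫ ω, ‖f (fun i => max (X n ω i) (Y n ω i))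
          - f (fun i => max (X' n ω i) (Y' n ω i))‖ ∂(P n)
          ≤ ∫ ω, (ε / 3 + (2 * C) * ψ (fun i => max (X' n ω i) (Y' n ω i))
            + (2 * C / η) * W n ω) ∂(P n) :=
        integral_mono_ae (hIfZ.sub hIfZ').norm hRHSint hptwise
      calc ∫ ω, ‖f (fun i => max (X n ω i) (Y n ω i))
            - f (fun i => max (X' n ω i) (Y' n ω i))‖ ∂(P n)
          ≤ ∫ ω, (ε / 3 + (2 * C) * ψ (fun i => max (X' n ω i) (Y' n ω i))
            + (2 * C / η) * W n ω) ∂(P n) := h1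
        _ = ε / 3 + (2 * C) * (∫ ω, ψ (fun i => max (X' n ω i) (Y' n ω i)) ∂(P n))
            + (2 * C / η) * (∫ ω, W n ω ∂(P n)) := by
            have hI1 : Integrable (fun ω : Ω n =>
                ε / 3 + (2 * C) * ψ (fun i => max (X' n ω i) (Y' n ω i))) (P n) :=
              (integrable_const (ε / 3)).add (hIψ.const_mul (2 * C))
            rw [integral_add hI1 ((hWint n).const_mul (2 * C / η)),
              integral_add (integrable_const (ε / 3)) (hIψ.const_mul (2 * C)),
              integral_const_mul, integral_const_mul, integral_const]
            simp [measure_univ]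
    -- combine the bounds
    have hb1 : (2 * C) * (∫ ω, ψ (fun i => max (X' n ω i) (Y' n ω i)) ∂(P n)) ≤ (2 * C) * c :=
      mul_le_mul_of_nonneg_left hψn.le (by positivity)
    have hb2 : (2 * C / η) * (∫ ω, W n ω ∂(P n)) ≤ (2 * C) * c := by
      have h1 : (2 * C / η) * (∫ ω, W n ω ∂(P n)) ≤ (2 * C / η) * (η * c) :=
        mul_le_mul_of_nonneg_left hWn.le (by positivity)
      have h2 : (2 * C / η) * (η * c) = (2 * C) * c := by
        field_simp
      linarith
    have hc1 : c * (6 * (C + 1)) = ε := by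
      rw [hcdef]; field_simp
    have hfinal : ε / 3 + (2 * C) * c + (2 * C) * c < ε := by nlinarith [hcpos.le, hC]
    linarith
  have h := key.add (hZ'conv f)
  simp only [zero_add] at h
  convert h using 2 with n
  ring
end

section
/- Let k ≥ 1, let μ₁, μ₂ be Borel probability measures on ℝ^k and let ν be a Borel probability measure on ℝ^{2k}. Let X_n, X̃_n, Y_n, Ỹ_n be ℝ^k-valued random vectors, all four defined on a common probability space for each n, such that X_n ≥ X̃_n, X_n ⇒ μ₁ and X̃_n ⇒ μ₁, and Y_n ≥ Ỹ_n, Y_n ⇒ μ₂ and Ỹ_n ⇒ μ₂. If the ℝ^{2k}-valued random vectors (X̃_n, Ỹ_n) converge weakly in law to ν, then the ℝ^{2k}-valued random vectors (X_n, Y_n) also converge weakly in law to ν. -/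
open MeasureTheory Filter Topology

section Aux

/-- tail cutoff function: `0` on `‖x‖ ≤ M`, `1` on `‖x‖ ≥ M+1`. -/
noncomputable def tailFn (k : ℕ) (M : ℝ) : BoundedContinuousFunction (Fin k → ℝ) ℝ :=
  BoundedContinuousFunction.mkOfBound
    ⟨fun x => max 0 (min 1 (‖x‖ - M)),
      continuous_const.max (continuous_const.min (continuous_norm.sub continuous_const))⟩ 1
    (by
      intro x y
      simp only [ContinuousMap.coe_mk, Real.dist_eq]
      have h1 : ∀ z : Fin k → ℝ, 0 ≤ max 0 (min 1 (‖z‖ - M)) := fun z => le_max_left _ _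
      have h2 : ∀ z : Fin k → ℝ, max 0 (min 1 (‖z‖ - M)) ≤ 1 := fun z =>
        max_le zero_le_one (min_le_left _ _)
      exact abs_sub_le_iff.2 ⟨by linarith [h1 y, h2 x], by linarith [h1 x, h2 y]⟩)

lemma tailFn_apply (k : ℕ) (M : ℝ) (x : Fin k → ℝ) :
    tailFn k M x = max 0 (min 1 (‖x‖ - M)) := rfl

/-- per-coordinate clamp to `[-(R+1), R+1]`. -/
noncomputable def clampFn (k : ℕ) (R : ℝ) (i : Fin k) :
    BoundedContinuousFunction (Fin k → ℝ) ℝ :=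
  BoundedContinuousFunction.mkOfBound
    ⟨fun x => max (-(R+1)) (min (R+1) (x i)),
      continuous_const.max (continuous_const.min (continuous_apply i))⟩ (2 * |R+1|)
    (by
      intro x y
      simp only [ContinuousMap.coe_mk, Real.dist_eq]
      have h1 : ∀ z : Fin k → ℝ, -|R+1| ≤ max (-(R+1)) (min (R+1) (z i)) := fun z =>
        le_max_of_le_left (by rw [neg_le_neg_iff]; exact le_abs_self _)
      have h2 : ∀ z : Fin k → ℝ, max (-(R+1)) (min (R+1) (z i)) ≤ |R+1| := fun z =>
        max_le (neg_le_abs _) ((min_le_left _ _).trans (le_abs_self _))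
      exact abs_sub_le_iff.2 ⟨by linarith [h1 y, h2 x], by linarith [h1 x, h2 y]⟩)

lemma clampFn_apply (k : ℕ) (R : ℝ) (i : Fin k) (x : Fin k → ℝ) :
    clampFn k R i x = max (-(R+1)) (min (R+1) (x i)) := rfl

lemma clampFn_mono (k : ℕ) (R : ℝ) (i : Fin k) {a b : Fin k → ℝ} (h : a i ≤ b i) :
    clampFn k R i a ≤ clampFn k R i b := by
  rw [clampFn_apply, clampFn_apply]
  exact max_le_max le_rfl (min_le_min le_rfl h)

lemma clampFn_step (k : ℕ) (R : ℝ) (i : Fin k) {a b : Fin k → ℝ} {η : ℝ}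
    (hη : η ≤ 1) (h1 : |a i| ≤ R) (h2 : a i + η ≤ b i) :
    clampFn k R i a + η ≤ clampFn k R i b := by
  rw [clampFn_apply, clampFn_apply]
  obtain ⟨hl, hr⟩ := abs_le.1 h1
  have h3 : max (-(R+1)) (min (R+1) (a i)) = a i := by
    rw [min_eq_right (by linarith), max_eq_right (by linarith)]
  have h4 : a i + η ≤ min (R+1) (b i) := le_min (by linarith) h2
  have h5 : min (R+1) (b i) ≤ max (-(R+1)) (min (R+1) (b i)) := le_max_right _ _
  linarith

lemma tail_small (k : ℕ) (μ : Measure (Fin k → ℝ)) [IsProbabilityMeasure μ] {δ : ℝ}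
    (hδ : 0 < δ) : ∃ M : ℕ, (μ {x | (M : ℝ) ≤ ‖x‖}).toReal ≤ δ := by
  have hs : ∀ m : ℕ, MeasurableSet {x : Fin k → ℝ | (m : ℝ) ≤ ‖x‖} := fun m =>
    measurableSet_le measurable_const continuous_norm.measurable
  have hanti : Antitone (fun m : ℕ => {x : Fin k → ℝ | (m : ℝ) ≤ ‖x‖}) := by
    intro m m' hmm' x hx
    simp only [Set.mem_setOf_eq] at hx ⊢
    exact le_trans (by exact_mod_cast Nat.cast_le.2 hmm') hx
  have hInter : (⋂ m : ℕ, {x : Fin k → ℝ | (m : ℝ) ≤ ‖x‖}) = ∅ := by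
    ext x
    simp only [Set.mem_iInter, Set.mem_setOf_eq, Set.mem_empty_iff_false, iff_false, not_forall,
      not_le]
    obtain ⟨m, hm⟩ := exists_nat_gt ‖x‖
    exact ⟨m, hm⟩
  have htends := tendsto_measure_iInter_atTop (μ := μ)
    (fun m => (hs m).nullMeasurableSet) hanti ⟨0, measure_ne_top _ _⟩
  rw [hInter, measure_empty] at htends
  have := htends.eventually_lt_const (by simp [hδ] : (0 : ENNReal) < ENNReal.ofReal δ)
  obtain ⟨m, hm⟩ := this.exists
  exact ⟨m, ENNReal.toReal_le_of_le_ofReal hδ.le hm.le⟩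

lemma integrable_comp_bcf {Ω β : Type*} [MeasurableSpace Ω] [TopologicalSpace β]
    [MeasurableSpace β] [OpensMeasurableSpace β] (P : Measure Ω) [IsFiniteMeasure P]
    (g : BoundedContinuousFunction β ℝ) {Z : Ω → β} (hZ : Measurable Z) :
    Integrable (fun ω => g (Z ω)) P :=
  Integrable.mono' (integrable_const ‖g‖)
    ((g.continuous.measurable.comp hZ).aestronglyMeasurable)
    (Filter.Eventually.of_forall fun ω => g.norm_coe_le_norm _)

end Aux

set_option maxHeartbeats 1000000 in
/-- **Coupling lemma for joint distributions (Lemma 4.3 generalization).**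
If `X n ≥ X' n` with both converging weakly to `μ₁`, `Y n ≥ Y' n` with both converging weakly
to `μ₂` (all four on a common probability space for each `n`), and the pairs `(X' n, Y' n)`
converge weakly in law to the Borel probability measure `ν` on `ℝ^k × ℝ^k ≅ ℝ^{2k}`,
then the pairs `(X n, Y n)` also converge weakly in law to `ν`. -/
theorem stochDom_joint_weak_limit
    (k : ℕ) (hk : 1 ≤ k)
    (μ₁ μ₂ : Measure (Fin k → ℝ)) [IsProbabilityMeasure μ₁] [IsProbabilityMeasure μ₂]
    (ν : Measure ((Fin k → ℝ) × (Fin k → ℝ))) [IsProbabilityMeasure ν]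
    (Ω : ℕ → Type*) [∀ n, MeasurableSpace (Ω n)]
    (P : ∀ n, Measure (Ω n)) [∀ n, IsProbabilityMeasure (P n)]
    (X X' Y Y' : ∀ n, Ω n → (Fin k → ℝ))
    (hX : ∀ n, Measurable (X n)) (hX' : ∀ n, Measurable (X' n))
    (hY : ∀ n, Measurable (Y n)) (hY' : ∀ n, Measurable (Y' n))
    (hgeX : ∀ n, ∀ᵐ ω ∂(P n), ∀ i, X' n ω i ≤ X n ω i)
    (hgeY : ∀ n, ∀ᵐ ω ∂(P n), ∀ i, Y' n ω i ≤ Y n ω i)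
    (hXconv : ∀ f : BoundedContinuousFunction (Fin k → ℝ) ℝ,
      Tendsto (fun n => ∫ ω, f (X n ω) ∂(P n)) atTop (𝓝 (∫ x, f x ∂μ₁)))
    (hX'conv : ∀ f : BoundedContinuousFunction (Fin k → ℝ) ℝ,
      Tendsto (fun n => ∫ ω, f (X' n ω) ∂(P n)) atTop (𝓝 (∫ x, f x ∂μ₁)))
    (hYconv : ∀ f : BoundedContinuousFunction (Fin k → ℝ) ℝ,
      Tendsto (fun n => ∫ ω, f (Y n ω) ∂(P n)) atTop (𝓝 (∫ x, f x ∂μ₂)))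
    (hY'conv : ∀ f : BoundedContinuousFunction (Fin k → ℝ) ℝ,
      Tendsto (fun n => ∫ ω, f (Y' n ω) ∂(P n)) atTop (𝓝 (∫ x, f x ∂μ₂)))
    (hpair'conv : ∀ f : BoundedContinuousFunction ((Fin k → ℝ) × (Fin k → ℝ)) ℝ,
      Tendsto (fun n => ∫ ω, f (X' n ω, Y' n ω) ∂(P n)) atTop (𝓝 (∫ x, f x ∂ν))) :
    ∀ f : BoundedContinuousFunction ((Fin k → ℝ) × (Fin k → ℝ)) ℝ,
      Tendsto (fun n => ∫ ω, f (X n ω, Y n ω) ∂(P n)) atTop (𝓝 (∫ x, f x ∂ν)) := by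
  intro f
  have key : Tendsto (fun n => (∫ ω, f (X n ω, Y n ω) ∂(P n)) -
      (∫ ω, f (X' n ω, Y' n ω) ∂(P n))) atTop (𝓝 0) := by
    rw [NormedAddCommGroup.tendsto_nhds_zero]
    intro ε hε
    set Cb : ℝ := ‖f‖ + 1 with hCbdef
    have hCb : 0 < Cb := by positivity
    have hfb : ∀ z, ‖f z‖ ≤ Cb := fun z => (f.norm_coe_le_norm z).trans (by simp [hCbdef])
    set δ : ℝ := ε / 4 with hδdef
    have hδ : 0 < δ := by positivity
    set δ' : ℝ := ε / (16 * Cb) with hδ'def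
    have hδ' : 0 < δ' := by positivity
    -- choose tail cutoff level M
    obtain ⟨M₁, hM₁⟩ := tail_small k μ₁ hδ'
    obtain ⟨M₂, hM₂⟩ := tail_small k μ₂ hδ'
    set M : ℕ := max M₁ M₂ with hMdef
    have hsub : ∀ m : ℕ, m ≤ M → {x : Fin k → ℝ | (M : ℝ) ≤ ‖x‖} ⊆ {x | (m : ℝ) ≤ ‖x‖} := by
      intro m hm x hx
      simp only [Set.mem_setOf_eq] at hx ⊢
      exact le_trans (by exact_mod_cast hm) hx
    have hM1' : (μ₁ {x : Fin k → ℝ | (M : ℝ) ≤ ‖x‖}).toReal ≤ δ' :=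
      le_trans (ENNReal.toReal_mono (measure_ne_top _ _)
        (measure_mono (hsub M₁ (le_max_left _ _)))) hM₁
    have hM2' : (μ₂ {x : Fin k → ℝ | (M : ℝ) ≤ ‖x‖}).toReal ≤ δ' :=
      le_trans (ENNReal.toReal_mono (measure_ne_top _ _)
        (measure_mono (hsub M₂ (le_max_right _ _)))) hM₂
    set R : ℝ := (M : ℝ) + 1 with hRdef
    have hR0 : (0 : ℝ) < R := by positivity
    set hb := tailFn k (M : ℝ) with hhbdef
    set g := clampFn k R with hgdef
    -- basic properties of hb
    have hb0 : ∀ x, 0 ≤ hb x := fun x => le_max_left _ _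
    have hb1 : ∀ x, hb x ≤ 1 := fun x => max_le zero_le_one (min_le_left _ _)
    have hbR : ∀ x : Fin k → ℝ, R ≤ ‖x‖ → hb x = 1 := by
      intro x hx
      rw [hhbdef, tailFn_apply]
      rw [min_eq_left (by rw [hRdef] at hx; linarith), max_eq_right zero_le_one]
    -- tail integral bounds
    have hS : MeasurableSet {x : Fin k → ℝ | (M : ℝ) ≤ ‖x‖} :=
      measurableSet_le measurable_const continuous_norm.measurable
    have htail : ∀ (μ : Measure (Fin k → ℝ)), IsProbabilityMeasure μ →
        (μ {x : Fin k → ℝ | (M : ℝ) ≤ ‖x‖}).toReal ≤ δ' → ∫ x, hb x ∂μ ≤ δ' := by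
      intro μ hμ hμδ
      calc ∫ x, hb x ∂μ
          ≤ ∫ x, ({x : Fin k → ℝ | (M : ℝ) ≤ ‖x‖}).indicator (fun _ => (1:ℝ)) x ∂μ := by
            apply integral_mono (hb.integrable μ) ((integrable_const (1:ℝ)).indicator hS)
            intro x
            by_cases hx : x ∈ {x : Fin k → ℝ | (M : ℝ) ≤ ‖x‖}
            · rw [Set.indicator_of_mem hx]; exact hb1 x
            · rw [Set.indicator_of_notMem hx]
              simp only [Set.mem_setOf_eq, not_le] at hx
              rw [hhbdef, tailFn_apply]
              exact max_le le_rfl ((min_le_right _ _).trans (by linarith))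
        _ = (μ {x : Fin k → ℝ | (M : ℝ) ≤ ‖x‖}).toReal := by
            rw [integral_indicator_const _ hS, smul_eq_mul, mul_one]; rfl
        _ ≤ δ' := hμδ
    -- uniform continuity on a compact ball
    have hKc : IsCompact (Metric.closedBall (0 : (Fin k → ℝ) × (Fin k → ℝ)) (R + 1)) :=
      isCompact_closedBall _ _
    have huc := hKc.uniformContinuousOn_of_continuous f.continuous.continuousOn
    rw [Metric.uniformContinuousOn_iff] at huc
    obtain ⟨η', hη'pos, hη'⟩ := huc δ hδ
    set η : ℝ := min η' 1 / 2 with hηdef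
    have hηpos : 0 < η := by
      rw [hηdef]; positivity
    have hη1 : η ≤ 1 := by
      rw [hηdef]
      have := min_le_right η' 1
      linarith
    have hηlt : η < η' := by
      rw [hηdef]
      rcases le_total η' 1 with h | h
      · rw [min_eq_left h]; linarith
      · rw [min_eq_right h]; linarith
    have hgmono : ∀ (i : Fin k) {a b : Fin k → ℝ}, a i ≤ b i → g i a ≤ g i b :=
      fun i {a b} h => clampFn_mono k R i h
    have hgstep : ∀ (i : Fin k) {a b : Fin k → ℝ}, |a i| ≤ R → a i + η ≤ b i →
        g i a + η ≤ g i b := fun i {a b} h1 h2 => clampFn_step k R i hη1 h1 h2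
    -- the per-n bound
    set bnd : ℕ → ℝ := fun n => δ + 2 * Cb *
      ((∫ ω, hb (X' n ω) ∂(P n)) + (∫ ω, hb (Y' n ω) ∂(P n)) +
        (∑ i, ((∫ ω, g i (X n ω) ∂(P n)) - (∫ ω, g i (X' n ω) ∂(P n)))) / η +
        (∑ i, ((∫ ω, g i (Y n ω) ∂(P n)) - (∫ ω, g i (Y' n ω) ∂(P n)))) / η) with hbnddef
    have claim1 : ∀ n, ‖(∫ ω, f (X n ω, Y n ω) ∂(P n)) -
        (∫ ω, f (X' n ω, Y' n ω) ∂(P n))‖ ≤ bnd n := by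
      intro n
      have hintf : Integrable (fun ω => f (X n ω, Y n ω)) (P n) :=
        integrable_comp_bcf _ f ((hX n).prodMk (hY n))
      have hintf' : Integrable (fun ω => f (X' n ω, Y' n ω)) (P n) :=
        integrable_comp_bcf _ f ((hX' n).prodMk (hY' n))
      have hintgX : ∀ i, Integrable (fun ω => g i (X n ω)) (P n) := fun i =>
        integrable_comp_bcf _ (g i) (hX n)
      have hintgX' : ∀ i, Integrable (fun ω => g i (X' n ω)) (P n) := fun i =>
        integrable_comp_bcf _ (g i) (hX' n)
      have hintgY : ∀ i, Integrable (fun ω => g i (Y n ω)) (P n) := fun i =>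
        integrable_comp_bcf _ (g i) (hY n)
      have hintgY' : ∀ i, Integrable (fun ω => g i (Y' n ω)) (P n) := fun i =>
        integrable_comp_bcf _ (g i) (hY' n)
      have hinthX : Integrable (fun ω => hb (X' n ω)) (P n) :=
        integrable_comp_bcf _ hb (hX' n)
      have hinthY : Integrable (fun ω => hb (Y' n ω)) (P n) :=
        integrable_comp_bcf _ hb (hY' n)
      have hsubX : ∀ i : Fin k, Integrable (fun ω => g i (X n ω) - g i (X' n ω)) (P n) :=
        fun i => (hintgX i).sub (hintgX' i)
      have hsubY : ∀ i : Fin k, Integrable (fun ω => g i (Y n ω) - g i (Y' n ω)) (P n) :=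
        fun i => (hintgY i).sub (hintgY' i)
      have hintsX : Integrable (fun ω => ∑ i, (g i (X n ω) - g i (X' n ω))) (P n) :=
        integrable_finset_sum _ fun i _ => hsubX i
      have hintsY : Integrable (fun ω => ∑ i, (g i (Y n ω) - g i (Y' n ω))) (P n) :=
        integrable_finset_sum _ fun i _ => hsubY i
      have hintsX2 : Integrable (fun ω => (∑ i, (g i (X n ω) - g i (X' n ω))) / η) (P n) :=
        hintsX.div_const η
      have hintsY2 : Integrable (fun ω => (∑ i, (g i (Y n ω) - g i (Y' n ω))) / η) (P n) :=
        hintsY.div_const η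
      have hintA : Integrable (fun ω => hb (X' n ω) + hb (Y' n ω)) (P n) := hinthX.add hinthY
      have hintB : Integrable (fun ω => hb (X' n ω) + hb (Y' n ω) +
          (∑ i, (g i (X n ω) - g i (X' n ω))) / η) (P n) := hintA.add hintsX2
      have hintT : Integrable (fun ω => hb (X' n ω) + hb (Y' n ω) +
          (∑ i, (g i (X n ω) - g i (X' n ω))) / η +
          (∑ i, (g i (Y n ω) - g i (Y' n ω))) / η) (P n) := hintB.add hintsY2
      have hintT2 : Integrable (fun ω => 2 * Cb * (hb (X' n ω) + hb (Y' n ω) +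
          (∑ i, (g i (X n ω) - g i (X' n ω))) / η +
          (∑ i, (g i (Y n ω) - g i (Y' n ω))) / η)) (P n) := hintT.const_mul (2 * Cb)
      have hintnrm : Integrable (fun ω => ‖f (X n ω, Y n ω) - f (X' n ω, Y' n ω)‖) (P n) :=
        (hintf.sub hintf').norm
      have hintR : Integrable (fun ω => δ + 2 * Cb * (hb (X' n ω) + hb (Y' n ω) +
          (∑ i, (g i (X n ω) - g i (X' n ω))) / η +
          (∑ i, (g i (Y n ω) - g i (Y' n ω))) / η)) (P n) := (integrable_const δ).add hintT2
      calc ‖(∫ ω, f (X n ω, Y n ω) ∂(P n)) - (∫ ω, f (X' n ω, Y' n ω) ∂(P n))‖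
          = ‖∫ ω, (f (X n ω, Y n ω) - f (X' n ω, Y' n ω)) ∂(P n)‖ := by
            rw [integral_sub hintf hintf']
        _ ≤ ∫ ω, ‖f (X n ω, Y n ω) - f (X' n ω, Y' n ω)‖ ∂(P n) :=
            norm_integral_le_integral_norm _
        _ ≤ ∫ ω, (δ + 2 * Cb * (hb (X' n ω) + hb (Y' n ω) +
              (∑ i, (g i (X n ω) - g i (X' n ω))) / η +
              (∑ i, (g i (Y n ω) - g i (Y' n ω))) / η)) ∂(P n) := by
            apply integral_mono_ae hintnrm hintR
            filter_upwards [hgeX n, hgeY n] with ω hgx hgy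
            -- pointwise inequality
            have hnnX : ∀ i, 0 ≤ g i (X n ω) - g i (X' n ω) := fun i =>
              sub_nonneg.2 (hgmono i (hgx i))
            have hnnY : ∀ i, 0 ≤ g i (Y n ω) - g i (Y' n ω) := fun i =>
              sub_nonneg.2 (hgmono i (hgy i))
            have hsumX : 0 ≤ ∑ i, (g i (X n ω) - g i (X' n ω)) :=
              Finset.sum_nonneg fun i _ => hnnX i
            have hsumY : 0 ≤ ∑ i, (g i (Y n ω) - g i (Y' n ω)) :=
              Finset.sum_nonneg fun i _ => hnnY i
            have hbr : 0 ≤ hb (X' n ω) + hb (Y' n ω) +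
                (∑ i, (g i (X n ω) - g i (X' n ω))) / η +
                (∑ i, (g i (Y n ω) - g i (Y' n ω))) / η := by
              have := div_nonneg hsumX hηpos.le
              have := div_nonneg hsumY hηpos.le
              have := hb0 (X' n ω)
              have := hb0 (Y' n ω)
              linarith
            by_cases hcase : R ≤ ‖X' n ω‖ ∨ R ≤ ‖Y' n ω‖ ∨
                (∃ i, η ≤ X n ω i - X' n ω i) ∨ (∃ i, η ≤ Y n ω i - Y' n ω i)
            · -- bad case: the bracket is at least 1
              have hbr1 : 1 ≤ hb (X' n ω) + hb (Y' n ω) +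
                  (∑ i, (g i (X n ω) - g i (X' n ω))) / η +
                  (∑ i, (g i (Y n ω) - g i (Y' n ω))) / η := by
                have hdX := div_nonneg hsumX hηpos.le
                have hdY := div_nonneg hsumY hηpos.le
                have h0X := hb0 (X' n ω)
                have h0Y := hb0 (Y' n ω)
                rcases hcase with h | h | ⟨i, hi⟩ | ⟨i, hi⟩
                · rw [hbR _ h]; linarith
                · rw [hbR _ h]; linarith
                · by_cases hri : |X' n ω i| ≤ R
                  · have hstep : g i (X' n ω) + η ≤ g i (X n ω) :=
                      hgstep i hri (by linarith)
                    have hle : η ≤ ∑ j, (g j (X n ω) - g j (X' n ω)) := by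
                      linarith [Finset.single_le_sum (f := fun j => g j (X n ω) - g j (X' n ω))
                        (fun j _ => hnnX j) (Finset.mem_univ i)]
                    have : 1 ≤ (∑ j, (g j (X n ω) - g j (X' n ω))) / η :=
                      (one_le_div hηpos).2 hle
                    linarith
                  · push_neg at hri
                    have : R ≤ ‖X' n ω‖ := le_trans hri.le
                      (by simpa [Real.norm_eq_abs] using norm_le_pi_norm (X' n ω) i)
                    rw [hbR _ this]; linarith
                · by_cases hri : |Y' n ω i| ≤ R
                  · have hstep : g i (Y' n ω) + η ≤ g i (Y n ω) :=
                      hgstep i hri (by linarith)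
                    have hle : η ≤ ∑ j, (g j (Y n ω) - g j (Y' n ω)) := by
                      linarith [Finset.single_le_sum (f := fun j => g j (Y n ω) - g j (Y' n ω))
                        (fun j _ => hnnY j) (Finset.mem_univ i)]
                    have : 1 ≤ (∑ j, (g j (Y n ω) - g j (Y' n ω))) / η :=
                      (one_le_div hηpos).2 hle
                    linarith
                  · push_neg at hri
                    have : R ≤ ‖Y' n ω‖ := le_trans hri.le
                      (by simpa [Real.norm_eq_abs] using norm_le_pi_norm (Y' n ω) i)
                    rw [hbR _ this]; linarith
              have hlhs : ‖f (X n ω, Y n ω) - f (X' n ω, Y' n ω)‖ ≤ 2 * Cb := by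
                have := hfb (X n ω, Y n ω)
                have := hfb (X' n ω, Y' n ω)
                have := norm_sub_le (f (X n ω, Y n ω)) (f (X' n ω, Y' n ω))
                linarith
              have h2m : 2 * Cb * 1 ≤ 2 * Cb * (hb (X' n ω) + hb (Y' n ω) +
                  (∑ i, (g i (X n ω) - g i (X' n ω))) / η +
                  (∑ i, (g i (Y n ω) - g i (Y' n ω))) / η) :=
                mul_le_mul_of_nonneg_left hbr1 (by linarith)
              linarith
            · -- good case: points are close and inside the compact ball
              push_neg at hcase
              obtain ⟨h1, h2, h3, h4⟩ := hcase
              have hX'norm : ‖X' n ω‖ ≤ R + 1 := by linarith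
              have hY'norm : ‖Y' n ω‖ ≤ R + 1 := by linarith
              have hXnorm : ‖X n ω‖ ≤ R + 1 := by
                apply (pi_norm_le_iff_of_nonneg (by linarith)).2
                intro i
                have hi1 := hgx i
                have hi2 := h3 i
                have hxi' : |X' n ω i| ≤ ‖X' n ω‖ := by
                  simpa [Real.norm_eq_abs] using norm_le_pi_norm (X' n ω) i
                obtain ⟨hl, hr⟩ := abs_le.1 hxi'
                rw [Real.norm_eq_abs]
                exact abs_le.2 ⟨by linarith, by linarith⟩
              have hYnorm : ‖Y n ω‖ ≤ R + 1 := by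
                apply (pi_norm_le_iff_of_nonneg (by linarith)).2
                intro i
                have hi1 := hgy i
                have hi2 := h4 i
                have hxi' : |Y' n ω i| ≤ ‖Y' n ω‖ := by
                  simpa [Real.norm_eq_abs] using norm_le_pi_norm (Y' n ω) i
                obtain ⟨hl, hr⟩ := abs_le.1 hxi'
                rw [Real.norm_eq_abs]
                exact abs_le.2 ⟨by linarith, by linarith⟩
              have hz : (X n ω, Y n ω) ∈ Metric.closedBall
                  (0 : (Fin k → ℝ) × (Fin k → ℝ)) (R + 1) := by
                rw [mem_closedBall_zero_iff]
                exact norm_prod_le_iff.2 ⟨hXnorm, hYnorm⟩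
              have hz' : (X' n ω, Y' n ω) ∈ Metric.closedBall
                  (0 : (Fin k → ℝ) × (Fin k → ℝ)) (R + 1) := by
                rw [mem_closedBall_zero_iff]
                exact norm_prod_le_iff.2 ⟨hX'norm, hY'norm⟩
              have hdX : dist (X n ω) (X' n ω) ≤ η := by
                apply (dist_pi_le_iff hηpos.le).2
                intro i
                rw [Real.dist_eq]
                exact abs_le.2 ⟨by linarith [hgx i, hηpos], (h3 i).le⟩
              have hdY : dist (Y n ω) (Y' n ω) ≤ η := by
                apply (dist_pi_le_iff hηpos.le).2
                intro i
                rw [Real.dist_eq]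
                exact abs_le.2 ⟨by linarith [hgy i, hηpos], (h4 i).le⟩
              have hdist : dist (X n ω, Y n ω) (X' n ω, Y' n ω) < η' := by
                rw [Prod.dist_eq]
                exact lt_of_le_of_lt (max_le hdX hdY) hηlt
              have := hη' _ hz _ hz' hdist
              rw [Real.dist_eq] at this
              have h2Cb : 0 ≤ 2 * Cb * (hb (X' n ω) + hb (Y' n ω) +
                  (∑ i, (g i (X n ω) - g i (X' n ω))) / η +
                  (∑ i, (g i (Y n ω) - g i (Y' n ω))) / η) :=
                mul_nonneg (by linarith) hbr
              rw [Real.norm_eq_abs]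
              linarith
        _ = bnd n := by
            rw [integral_add (integrable_const δ) hintT2,
              integral_const, integral_const_mul,
              integral_add hintB hintsY2,
              integral_add hintA hintsX2,
              integral_add hinthX hinthY, integral_div, integral_div,
              integral_finset_sum _ (fun i _ => hsubX i),
              integral_finset_sum _ (fun i _ => hsubY i)]
            have e1 : ∀ i : Fin k, ∫ a, (g i (X n a) - g i (X' n a)) ∂(P n) =
                (∫ a, g i (X n a) ∂(P n)) - ∫ a, g i (X' n a) ∂(P n) := fun i =>
              integral_sub (hintgX i) (hintgX' i)
            have e2 : ∀ i : Fin k, ∫ a, (g i (Y n a) - g i (Y' n a)) ∂(P n) =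
                (∫ a, g i (Y n a) ∂(P n)) - ∫ a, g i (Y' n a) ∂(P n) := fun i =>
              integral_sub (hintgY i) (hintgY' i)
            simp only [e1, e2, hbnddef, measure_univ, ENNReal.toReal_one, probReal_univ, smul_eq_mul, one_mul]
    -- convergence of the bound
    have hlim : Tendsto bnd atTop (𝓝 (δ + 2 * Cb *
        ((∫ x, hb x ∂μ₁) + (∫ x, hb x ∂μ₂) + 0 / η + 0 / η))) := by
      apply tendsto_const_nhds.add
      apply Tendsto.const_mul
      apply Tendsto.add
      apply Tendsto.add
      · exact (hX'conv hb).add (hY'conv hb)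
      · apply Tendsto.div_const
        have : Tendsto (fun n => ∑ i : Fin k,
            ((∫ ω, g i (X n ω) ∂(P n)) - ∫ ω, g i (X' n ω) ∂(P n))) atTop
            (𝓝 (∑ _i : Fin k, (0 : ℝ))) := by
          apply tendsto_finset_sum
          intro i _
          have := (hXconv (g i)).sub (hX'conv (g i))
          simpa using this
        simpa using this
      · apply Tendsto.div_const
        have : Tendsto (fun n => ∑ i : Fin k,
            ((∫ ω, g i (Y n ω) ∂(P n)) - ∫ ω, g i (Y' n ω) ∂(P n))) atTop
            (𝓝 (∑ _i : Fin k, (0 : ℝ))) := by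
          apply tendsto_finset_sum
          intro i _
          have := (hYconv (g i)).sub (hY'conv (g i))
          simpa using this
        simpa using this
    have hHx : ∫ x, hb x ∂μ₁ ≤ δ' := htail μ₁ inferInstance hM1'
    have hHy : ∫ x, hb x ∂μ₂ ≤ δ' := htail μ₂ inferInstance hM2'
    have hHx0 : 0 ≤ ∫ x, hb x ∂μ₁ := integral_nonneg hb0
    have hHy0 : 0 ≤ ∫ x, hb x ∂μ₂ := integral_nonneg hb0
    have hLlt : δ + 2 * Cb * ((∫ x, hb x ∂μ₁) + (∫ x, hb x ∂μ₂) + 0 / η + 0 / η) < ε := by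
      have hmul : 2 * Cb * ((∫ x, hb x ∂μ₁) + (∫ x, hb x ∂μ₂) + 0 / η + 0 / η) ≤
          2 * Cb * (2 * δ') := by
        apply mul_le_mul_of_nonneg_left _ (by linarith)
        simp only [zero_div, add_zero]
        linarith
      have heq : 2 * Cb * (2 * δ') = ε / 4 := by
        rw [hδ'def]; field_simp; ring
      rw [hδdef] at *
      linarith
    filter_upwards [hlim.eventually_lt_const hLlt] with n hn
    exact lt_of_le_of_lt (claim1 n) hn
  have heq : (fun n => ∫ ω, f (X n ω, Y n ω) ∂(P n)) =
      fun n => ((∫ ω, f (X n ω, Y n ω) ∂(P n)) - (∫ ω, f (X' n ω, Y' n ω) ∂(P n))) +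
        (∫ ω, f (X' n ω, Y' n ω) ∂(P n)) := by
    funext n; ring
  rw [heq]
  simpa using key.add (hpair'conv f)
end

section
/- Fix η ∈ (0,1) and γ > 0 with η < γ/(1+γ). Set w⁻ = (η² − γ²(1−η)²)/(γ²(1−η) + η) and define g : (η−1, η) → ℝ by g(w) = (γ²/η + 1/(1−η))·w + γ²·log(η−w) − log(w+1−η). Then: (i) η−1 < w⁻ < 0; (ii) g'(0) = 0 and g'(w⁻) = 0, i.e., 0 and w⁻ are exactly the critical points computed in the saddle point analysis; (iii) g''(0) = 1/(1−η)² − γ²/η² < 0; and (iv) g(w⁻) < g(0). -/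
open Real Set

/-- **Critical points of the phase function in the boundary-dominated regime
(proof of Proposition `Prop: gauss`).** For `η ∈ (0,1)`, `γ > 0` with `η < γ/(1+γ)`, set
`w⁻ = (η² − γ²(1−η)²)/(γ²(1−η) + η)` and
`g(w) = (γ²/η + 1/(1−η))w + γ²·log(η−w) − log(w+1−η)` on `(η−1, η)`. Then:
(i) `η−1 < w⁻ < 0`; (ii) `0` and `w⁻` are exactly the critical points of `g` in `(η−1, η)`;
(iii) `g''(0) = 1/(1−η)² − γ²/η² < 0`; and (iv) `g(w⁻) < g(0)`. -/
theorem phase_function_critical_points_gaussian_regime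
    (η γ : ℝ) (hη : η ∈ Ioo (0 : ℝ) 1) (hγ : 0 < γ) (hc : η < γ / (1 + γ))
    (wm : ℝ) (hwm : wm = (η ^ 2 - γ ^ 2 * (1 - η) ^ 2) / (γ ^ 2 * (1 - η) + η))
    (g : ℝ → ℝ)
    (hg : ∀ w, g w = (γ ^ 2 / η + 1 / (1 - η)) * w
      + γ ^ 2 * Real.log (η - w) - Real.log (w + 1 - η)) :
    (η - 1 < wm ∧ wm < 0) ∧
    (deriv g 0 = 0 ∧ deriv g wm = 0 ∧
      ∀ w ∈ Ioo (η - 1) η, deriv g w = 0 → w = 0 ∨ w = wm) ∧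
    (deriv (deriv g) 0 = 1 / (1 - η) ^ 2 - γ ^ 2 / η ^ 2 ∧
      deriv (deriv g) 0 < 0) ∧
    g wm < g 0 := by
  obtain ⟨hη0, hη1⟩ := hη
  have h1η : (0:ℝ) < 1 - η := by linarith
  have key : η < γ * (1 - η) := by
    have h := (lt_div_iff₀ (by linarith : (0:ℝ) < 1 + γ)).mp hc
    nlinarith
  have hD : (0:ℝ) < γ ^ 2 * (1 - η) + η := by positivity
  have hnum : η ^ 2 - γ ^ 2 * (1 - η) ^ 2 < 0 := by nlinarith
  have hwm0 : wm < 0 := by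
    rw [hwm]
    exact div_neg_of_neg_of_pos hnum hD
  have hwm1 : η - 1 < wm := by
    rw [hwm, lt_div_iff₀ hD]
    nlinarith
  have hgf : g = fun w => (γ ^ 2 / η + 1 / (1 - η)) * w
      + γ ^ 2 * Real.log (η - w) - Real.log (w + 1 - η) := funext hg
  -- derivative of g on the interval
  have hder : ∀ w ∈ Ioo (η - 1) η, HasDerivAt g
      ((γ ^ 2 / η + 1 / (1 - η)) - γ ^ 2 / (η - w) - 1 / (w + 1 - η)) w := by
    intro w hw
    have h1 : 0 < η - w := by linarith [hw.2]
    have h2 : 0 < w + 1 - η := by linarith [hw.1]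
    have hu1 : HasDerivAt (fun w : ℝ => η - w) (-1) w := by
      simpa using (hasDerivAt_id w).const_sub η
    have hu2 : HasDerivAt (fun w : ℝ => w + 1 - η) 1 w := by
      simpa using ((hasDerivAt_id w).add_const 1).sub_const η
    have hL1 : HasDerivAt (fun w : ℝ => Real.log (η - w)) (-(η - w)⁻¹) w := by
      simpa [Function.comp_def] using (Real.hasDerivAt_log h1.ne').comp w hu1
    have hL2 : HasDerivAt (fun w : ℝ => Real.log (w + 1 - η)) ((w + 1 - η)⁻¹) w := by
      simpa [Function.comp_def] using (Real.hasDerivAt_log h2.ne').comp w hu2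
    have hA : HasDerivAt (fun w : ℝ => (γ ^ 2 / η + 1 / (1 - η)) * w)
        (γ ^ 2 / η + 1 / (1 - η)) w := by
      simpa using (hasDerivAt_id w).const_mul (γ ^ 2 / η + 1 / (1 - η))
    rw [hgf]
    have hd := (hA.add (hL1.const_mul (γ ^ 2))).sub hL2
    convert hd using 1
    all_goals first | rfl | ring
  have hderiv : ∀ w ∈ Ioo (η - 1) η, deriv g w =
      (γ ^ 2 / η + 1 / (1 - η)) - γ ^ 2 / (η - w) - 1 / (w + 1 - η) :=
    fun w hw => (hder w hw).deriv
  have h0mem : (0:ℝ) ∈ Ioo (η - 1) η := ⟨by linarith, hη0⟩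
  have hwmmem : wm ∈ Ioo (η - 1) η := ⟨hwm1, by linarith⟩
  -- deriv g 0 = 0
  have hd0 : deriv g 0 = 0 := by
    rw [hderiv 0 h0mem]
    have h1ηne := h1η.ne'
    field_simp
    linear_combination (-η ^ 2) * inv_mul_cancel₀ h1ηne
  -- deriv g wm = 0
  have hdwm : deriv g wm = 0 := by
    have e1 : η - wm = γ ^ 2 * (1 - η) / (γ ^ 2 * (1 - η) + η) := by
      rw [hwm]; field_simp; ring
    have e2 : wm + 1 - η = η / (γ ^ 2 * (1 - η) + η) := by
      rw [hwm]; field_simp; ring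
    rw [hderiv wm hwmmem, e1, e2]
    rw [div_div_eq_mul_div, div_div_eq_mul_div]
    field_simp
    ring
  -- exactness of critical points
  have hexact : ∀ w ∈ Ioo (η - 1) η, deriv g w = 0 → w = 0 ∨ w = wm := by
    intro w hw h0
    rw [hderiv w hw] at h0
    have h1 : 0 < η - w := by linarith [hw.2]
    have h2 : 0 < w + 1 - η := by linarith [hw.1]
    have key2 : w * ((γ ^ 2 * (1 - η) + η) * w - (η ^ 2 - γ ^ 2 * (1 - η) ^ 2)) = 0 := by
      field_simp at h0
      nlinarith [h0]
    rcases mul_eq_zero.mp key2 with h | h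
    · exact Or.inl h
    · right
      rw [hwm, eq_div_iff hD.ne']
      linarith
  -- second derivative
  have hev : deriv g =ᶠ[nhds (0:ℝ)]
      (fun w => (γ ^ 2 / η + 1 / (1 - η)) - γ ^ 2 / (η - w) - 1 / (w + 1 - η)) := by
    filter_upwards [Ioo_mem_nhds h0mem.1 h0mem.2] with w hw using hderiv w hw
  have h2d : deriv (deriv g) 0 = 1 / (1 - η) ^ 2 - γ ^ 2 / η ^ 2 := by
    rw [hev.deriv_eq]
    have hu1 : HasDerivAt (fun w : ℝ => η - w) (-1) 0 := by
      simpa using (hasDerivAt_id (0:ℝ)).const_sub η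
    have hu2 : HasDerivAt (fun w : ℝ => w + 1 - η) 1 0 := by
      simpa using ((hasDerivAt_id (0:ℝ)).add_const 1).sub_const η
    have hinv1 : HasDerivAt (fun w : ℝ => γ ^ 2 / (η - w)) (γ ^ 2 / η ^ 2) 0 := by
      have := (hu1.inv (by simpa using hη0.ne')).const_mul (γ ^ 2)
      simp only [div_eq_mul_inv]
      convert this using 1
      all_goals first | rfl | simp [h1η.ne']
    have hinv2 : HasDerivAt (fun w : ℝ => 1 / (w + 1 - η)) (-(1 / (1 - η) ^ 2)) 0 := by
      have := hu2.inv (by simpa using h1η.ne')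
      simp only [one_div]
      convert this using 1
      all_goals first | rfl | (simp; ring)
    have hc1 : HasDerivAt (fun _ : ℝ => γ ^ 2 / η + 1 / (1 - η)) 0 0 := hasDerivAt_const _ _
    have hd := (hc1.sub hinv1).sub hinv2
    erw [hd.deriv]
    ring
  have h2dneg : deriv (deriv g) 0 < 0 := by
    rw [h2d]
    have : 1 / (1 - η) ^ 2 < γ ^ 2 / η ^ 2 := by
      rw [div_lt_div_iff₀ (by positivity) (by positivity)]
      nlinarith
    linarith
  -- monotonicity on [wm, 0]
  have hsub : Icc wm 0 ⊆ Ioo (η - 1) η := fun x hx =>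
    ⟨by linarith [hx.1], by linarith [hx.2]⟩
  have hmono : StrictMonoOn g (Icc wm 0) := by
    apply strictMonoOn_of_deriv_pos (convex_Icc _ _)
    · intro x hx
      exact (hder x (hsub hx)).continuousAt.continuousWithinAt
    · intro x hx
      rw [interior_Icc] at hx
      have hxI : x ∈ Ioo (η - 1) η := hsub ⟨hx.1.le, hx.2.le⟩
      rw [hderiv x hxI]
      have h1 : 0 < η - x := by linarith [hxI.2]
      have h2 : 0 < x + 1 - η := by linarith [hxI.1]
      have hden : 0 < η * (1 - η) * (η - x) * (x + 1 - η) := by positivity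
      have hR : 0 < x * ((η ^ 2 - γ ^ 2 * (1 - η) ^ 2) - (γ ^ 2 * (1 - η) + η) * x) := by
        apply mul_pos_of_neg_of_neg hx.2
        have : wm < x := hx.1
        rw [hwm, div_lt_iff₀ hD] at this
        nlinarith
      have heq : (γ ^ 2 / η + 1 / (1 - η)) - γ ^ 2 / (η - x) - 1 / (x + 1 - η)
          = (x * ((η ^ 2 - γ ^ 2 * (1 - η) ^ 2) - (γ ^ 2 * (1 - η) + η) * x))
            / (η * (1 - η) * (η - x) * (x + 1 - η)) := by
        field_simp
        ring
      rw [heq]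
      exact div_pos hR hden
  have hfin : g wm < g 0 :=
    hmono (left_mem_Icc.mpr hwm0.le) (right_mem_Icc.mpr hwm0.le) hwm0
  exact ⟨⟨hwm1, hwm0⟩, ⟨hd0, hdwm, hexact⟩, ⟨h2d, h2dneg⟩, hfin⟩
end
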